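/- arXiv:2006.14578 — 3 statements merged into one kernel-verified Lean document; each statement's English description precedes it below -/
import Mathlib

section
/- For positive invertible elements ρ in a finite von Neumann algebra (or positive definite matrices), the derivative of the logarithm along a derivation δ satisfies δ(ln ρ) = ∫₀^∞ (ρ + r)^{-1} δ(ρ) (ρ + r)^{-1} dr. -/
open Matrix MeasureTheory
open scoped ComplexOrder

attribute [local instance] Matrix.normedAddCommGroup Matrix.normedSpace

noncomputable section

open Set Filter Topology

abbrev EB {n : ℕ} (i j : Fin n) : Matrix (Fin n) (Fin n) ℂ := single i j 1

lemma EB_mul {n : ℕ} (i j k l : Fin n) :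
    EB i j * EB k l = if j = k then EB i l else 0 := by
  unfold EB
  split
  · subst ‹j = k›; rw [single_mul_single_same]; norm_num
  · exact single_mul_single_of_ne (h := ‹¬ j = k›) ..

lemma sum_EB_diag (n : ℕ) : ∑ i : Fin n, EB i i = (1 : Matrix (Fin n) (Fin n) ℂ) := by
  ext a b
  rw [Matrix.sum_apply]
  rw [Finset.sum_eq_single (f := fun i => single i i (1:ℂ) a b) a
    (fun i _ hia => single_apply_of_ne _ _ _ _ _ (fun h => hia h.1)) (by simp)]
  by_cases hab : a = b
  · subst hab; simp [Matrix.one_apply]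
  · rw [single_apply_of_ne _ _ _ _ _ (fun h => hab h.2), Matrix.one_apply, if_neg hab]

lemma derivation_inner {n : ℕ} [NeZero n]
    (δ : Matrix (Fin n) (Fin n) ℂ →ₗ[ℂ] Matrix (Fin n) (Fin n) ℂ)
    (hL : ∀ x y, δ (x * y) = δ x * y + x * δ y) :
    ∃ a, ∀ x, δ x = a * x - x * a := by
  classical
  set z : Fin n := 0 with hz
  refine ⟨∑ i, δ (EB i z) * EB z i, fun x => ?_⟩
  set a : Matrix (Fin n) (Fin n) ℂ := ∑ i, δ (EB i z) * EB z i with ha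
  have hEzz : EB z z * EB z z = EB z z := by rw [EB_mul]; simp
  have claim2 : EB z z * δ (EB z z) * EB z z = 0 := by
    have h := hL (EB z z) (EB z z)
    rw [hEzz] at h
    have h2 := congrArg (fun M => EB z z * M * EB z z) h
    simp only [mul_add, add_mul, ← mul_assoc, hEzz] at h2
    rw [mul_assoc (EB z z * δ (EB z z)) (EB z z) (EB z z), hEzz] at h2
    exact add_eq_right.mp h2.symm
  have claim3 : ∀ i k : Fin n, δ (EB z k) * EB i z + EB z k * δ (EB i z)
      = if k = i then δ (EB z z) else 0 := by
    intro i k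
    have h := hL (EB z k) (EB i z)
    rw [EB_mul] at h
    split
    · rw [if_pos ‹k = i›] at h; exact h.symm
    · rw [if_neg ‹¬ k = i›] at h; rw [← h, map_zero]
  have key : ∀ j k : Fin n, δ (EB j k) = a * EB j k - EB j k * a := by
    intro j k
    have haE : a * EB j k = δ (EB j z) * EB z k := by
      rw [ha, Finset.sum_mul]
      rw [Finset.sum_eq_single j (fun i _ hij => by rw [mul_assoc, EB_mul, if_neg hij, mul_zero]) (by simp)]
      rw [mul_assoc, EB_mul, if_pos rfl]
    have hEa : EB j k * a = - (EB j z * δ (EB z k)) := by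
      rw [ha, Finset.mul_sum]
      have step : ∀ i : Fin n, EB j k * (δ (EB i z) * EB z i)
          = (if k = i then EB j z * δ (EB z z) * EB z i else 0) - EB j z * δ (EB z k) * EB i i := by
        intro i
        have hjk : EB j k = EB j z * EB z k := by rw [EB_mul, if_pos rfl]
        have h3 := claim3 i k
        have hrw : EB z k * δ (EB i z) = (if k = i then δ (EB z z) else 0) - δ (EB z k) * EB i z := by
          rw [← h3]; abel
        calc EB j k * (δ (EB i z) * EB z i) = EB j z * (EB z k * δ (EB i z)) * EB z i := by
              rw [hjk]; noncomm_ring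
          _ = EB j z * ((if k = i then δ (EB z z) else 0) - δ (EB z k) * EB i z) * EB z i := by rw [hrw]
          _ = (if k = i then EB j z * δ (EB z z) * EB z i else 0) - EB j z * δ (EB z k) * (EB i z * EB z i) := by
              split <;> simp [mul_sub, sub_mul, mul_assoc]
          _ = (if k = i then EB j z * δ (EB z z) * EB z i else 0) - EB j z * δ (EB z k) * EB i i := by
              rw [EB_mul, if_pos rfl]
      rw [Finset.sum_congr rfl (fun i _ => step i), Finset.sum_sub_distrib, Finset.sum_ite_eq]
      simp only [Finset.mem_univ, if_true]
      rw [← Finset.mul_sum, sum_EB_diag, mul_one]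
      have hz2 : EB j z * δ (EB z z) * EB z k = 0 := by
        have heq : EB j z * δ (EB z z) * EB z k = EB j z * (EB z z * δ (EB z z) * EB z z) * EB z k := by
          have h1 : EB j z * EB z z = EB j z := by rw [EB_mul, if_pos rfl]
          have h2 : EB z z * EB z k = EB z k := by rw [EB_mul, if_pos rfl]
          calc EB j z * δ (EB z z) * EB z k = (EB j z * EB z z) * δ (EB z z) * (EB z z * EB z k) := by
                rw [h1, h2]
            _ = EB j z * (EB z z * δ (EB z z) * EB z z) * EB z k := by noncomm_ring
        rw [heq, claim2, mul_zero, zero_mul]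
      rw [hz2]
      abel
    have hjk : EB j k = EB j z * EB z k := by rw [EB_mul, if_pos rfl]
    rw [haE, hEa, hjk, hL]
    abel
  have hx := matrix_eq_sum_single x
  calc δ x = δ (∑ i, ∑ j, single i j (x i j)) := by rw [← hx]
    _ = ∑ i, ∑ j, δ (single i j (x i j)) := by rw [map_sum]; exact Finset.sum_congr rfl fun i _ => map_sum δ _ _
    _ = ∑ i, ∑ j, (a * single i j (x i j) - single i j (x i j) * a) := by
        refine Finset.sum_congr rfl fun i _ => Finset.sum_congr rfl fun j _ => ?_
        have hsm : single i j (x i j) = (x i j) • EB i j := by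
          unfold EB; rw [smul_single, smul_eq_mul, mul_one]
        rw [hsm, LinearMap.map_smul, key i j, smul_sub, mul_smul_comm, smul_mul_assoc]
    _ = a * x - x * a := by
        simp only [Finset.sum_sub_distrib, ← Finset.mul_sum, ← Finset.sum_mul]
        rw [← hx]

lemma ratio_tendsto {c e : ℝ} :
    Tendsto (fun r : ℝ => Real.log (c + r) - Real.log (e + r)) atTop (nhds 0) := by
  have h1 : Tendsto (fun r : ℝ => (c + r) / (e + r)) atTop (nhds 1) := by
    have h : ∀ᶠ r : ℝ in atTop, (c + r) / (e + r) = 1 + (c - e) / (e + r) := by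
      filter_upwards [eventually_gt_atTop (max (-e) (-c))] with r hr
      have he : e + r ≠ 0 := by
        have := lt_of_le_of_lt (le_max_left (-e) (-c)) hr; linarith
      field_simp
      ring
    rw [show (1 : ℝ) = 1 + 0 by ring]
    refine Tendsto.congr' (Filter.EventuallyEq.symm h) (tendsto_const_nhds.add ?_)
    have h2 : Tendsto (fun r : ℝ => e + r) atTop atTop := tendsto_atTop_add_const_left _ _ tendsto_id
    simpa [div_eq_mul_inv] using (tendsto_inv_atTop_zero.comp h2).const_mul (c - e)
  have h2 : ∀ᶠ r : ℝ in atTop, Real.log ((c + r) / (e + r)) = Real.log (c + r) - Real.log (e + r) := by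
    filter_upwards [eventually_gt_atTop (max (-e) (-c))] with r hr
    have he : e + r ≠ 0 := by
      have := lt_of_le_of_lt (le_max_left (-e) (-c)) hr; linarith
    have hc : c + r ≠ 0 := by
      have := lt_of_le_of_lt (le_max_right (-e) (-c)) hr; linarith
    exact Real.log_div hc he
  have h3 := (Real.continuousAt_log (one_ne_zero)).tendsto.comp h1
  rw [Real.log_one] at h3
  exact h3.congr' h2

lemma deriv_aux {c e : ℝ} (hc : 0 < c) (he : 0 < e) {r : ℝ} (hr : r ∈ Ici (0:ℝ)) :
    HasDerivAt (fun s : ℝ => Real.log (c + s) - Real.log (e + s)) ((c + r)⁻¹ - (e + r)⁻¹) r := by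
  have hcr : c + r ≠ 0 := by have := hr.out; positivity
  have her : e + r ≠ 0 := by have := hr.out; positivity
  have h1 : HasDerivAt (fun s : ℝ => c + s) 1 r := (hasDerivAt_id r).const_add c
  have h2 : HasDerivAt (fun s : ℝ => e + s) 1 r := (hasDerivAt_id r).const_add e
  have d1 := (Real.hasDerivAt_log hcr).comp r h1
  have d2 := (Real.hasDerivAt_log her).comp r h2
  have := d1.sub d2; simp only [mul_one] at this; exact this

lemma scalar_aux {c e : ℝ} (hc : 0 < c) (he : 0 < e) (hce : c ≤ e) :
    IntegrableOn (fun r : ℝ => (c + r)⁻¹ - (e + r)⁻¹) (Ioi 0) ∧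
    ∫ r in Ioi (0:ℝ), ((c + r)⁻¹ - (e + r)⁻¹) = Real.log e - Real.log c := by
  have hcont : ContinuousWithinAt (fun s : ℝ => Real.log (c + s) - Real.log (e + s)) (Ici 0) 0 :=
    (deriv_aux hc he (self_mem_Ici)).continuousAt.continuousWithinAt
  have hderiv : ∀ x ∈ Ioi (0:ℝ),
      HasDerivAt (fun s : ℝ => Real.log (c + s) - Real.log (e + s)) ((c + x)⁻¹ - (e + x)⁻¹) x :=
    fun x hx => deriv_aux hc he (mem_Ici.mpr (le_of_lt hx))
  have hpos : ∀ x ∈ Ioi (0:ℝ), 0 ≤ (c + x)⁻¹ - (e + x)⁻¹ := by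
    intro x hx
    have h1 : 0 < c + x := by have := hx.out; linarith
    have h2 : 0 < e + x := by have := hx.out; linarith
    have h3 : (e + x)⁻¹ ≤ (c + x)⁻¹ := by
      apply inv_anti₀ h1; linarith
    linarith
  refine ⟨integrableOn_Ioi_deriv_of_nonneg hcont hderiv hpos ratio_tendsto, ?_⟩
  have h := integral_Ioi_of_hasDerivAt_of_nonneg hcont hderiv hpos ratio_tendsto
  rw [h]
  simp [Real.log_div, hc.ne', he.ne']

lemma scalar_integrable {c e : ℝ} (hc : 0 < c) (he : 0 < e) :
    IntegrableOn (fun r : ℝ => (c + r)⁻¹ - (e + r)⁻¹) (Ioi 0) := by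
  rcases le_total c e with h | h
  · exact (scalar_aux hc he h).1
  · have h2 := (scalar_aux he hc h).1.neg
    refine h2.congr (Filter.Eventually.of_forall fun r => ?_)
    simp only [Pi.neg_apply]
    ring
  
lemma scalar_integral {c e : ℝ} (hc : 0 < c) (he : 0 < e) :
    ∫ r in Ioi (0:ℝ), ((c + r)⁻¹ - (e + r)⁻¹) = Real.log e - Real.log c := by
  rcases le_total c e with h | h
  · exact (scalar_aux hc he h).2
  · have h2 := (scalar_aux he hc h).2
    have : ∫ r in Ioi (0:ℝ), ((c + r)⁻¹ - (e + r)⁻¹)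
        = ∫ r in Ioi (0:ℝ), -((e + r)⁻¹ - (c + r)⁻¹) := by
      refine setIntegral_congr_fun measurableSet_Ioi (fun r _ => by ring)
    rw [this, integral_neg, h2]
    ring

lemma comm_diag_expand {n : ℕ} (g : Fin n → ℂ) (b : Matrix (Fin n) (Fin n) ℂ) :
    diagonal g * b - b * diagonal g
      = ∑ i : Fin n, ∑ j : Fin n, ((g i - g j) * b i j) • single i j (1:ℂ) := by
  ext p q
  simp only [Matrix.sub_apply, Matrix.diagonal_mul, Matrix.mul_diagonal, Matrix.sum_apply,
    Matrix.smul_apply, Matrix.single, Matrix.of_apply, smul_eq_mul, mul_ite, mul_one, mul_zero]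
  rw [Finset.sum_comm]
  rw [Finset.sum_eq_single q]
  · rw [Finset.sum_eq_single p]
    · simp; ring
    · intro i _ hip; simp [hip]
    · simp
  · intro j _ hjq
    apply Finset.sum_eq_zero
    intro i _
    simp [hjq]
  · simp

/-- For a derivation `δ` on the matrix algebra and a positive invertible `ρ`,
`δ(ln ρ) = ∫₀^∞ (ρ + r)⁻¹ δ(ρ) (ρ + r)⁻¹ dr`. -/
theorem derivation_log_integral {n : ℕ}
    (δ : Matrix (Fin n) (Fin n) ℂ →ₗ[ℂ] Matrix (Fin n) (Fin n) ℂ)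
    (hLeibniz : ∀ x y, δ (x * y) = δ x * y + x * δ y)
    (ρ : Matrix (Fin n) (Fin n) ℂ) (hρ : ρ.PosDef) :
    δ (cfc Real.log ρ) =
      ∫ r in Set.Ioi (0 : ℝ),
        (ρ + r • (1 : Matrix (Fin n) (Fin n) ℂ))⁻¹ * δ ρ *
          (ρ + r • (1 : Matrix (Fin n) (Fin n) ℂ))⁻¹ := by
  rcases Nat.eq_zero_or_pos n with hn | hn
  · subst hn; exact Subsingleton.elim _ _
  have : NeZero n := ⟨hn.ne'⟩
  classical
  obtain ⟨a, hainner⟩ := derivation_inner δ hLeibniz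
  have hH : ρ.IsHermitian := hρ.1
  set U : Matrix (Fin n) (Fin n) ℂ := (hH.eigenvectorUnitary : Matrix (Fin n) (Fin n) ℂ) with hU
  set d : Fin n → ℝ := hH.eigenvalues with hd
  have hdpos : ∀ i, 0 < d i := fun i => hρ.eigenvalues_pos i
  have hu1 : U * star U = 1 := (Matrix.mem_unitaryGroup_iff).mp hH.eigenvectorUnitary.2
  have hu2 : star U * U = 1 := (Matrix.mem_unitaryGroup_iff').mp hH.eigenvectorUnitary.2
  have hspec : ρ = U * diagonal (fun i => (d i : ℂ)) * star U := hH.spectral_theorem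
  set b : Matrix (Fin n) (Fin n) ℂ := star U * a * U with hb
  have hab : a = U * b * star U := by
    rw [hb]
    calc a = (U * star U) * a * (U * star U) := by rw [hu1]; simp
      _ = U * (star U * a * U) * star U := by noncomm_ring
  have sandwich_mul : ∀ X Y : Matrix (Fin n) (Fin n) ℂ,
      (U * X * star U) * (U * Y * star U) = U * (X * Y) * star U := by
    intro X Y
    calc (U * X * star U) * (U * Y * star U) = U * X * (star U * U) * Y * star U := by noncomm_ring
      _ = U * (X * Y) * star U := by rw [hu2]; noncomm_ring
  -- the common RHS
  set T : Matrix (Fin n) (Fin n) ℂ := ∑ i : Fin n, ∑ j : Fin n,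
    (((Real.log (d j) - Real.log (d i) : ℝ) : ℂ) * b i j) • (U * single i j (1:ℂ) * star U) with hT
  -- LHS
  have hLHS : δ (cfc Real.log ρ) = T := by
    have hlog : cfc Real.log ρ = U * diagonal (fun i => ((Real.log (d i) : ℝ) : ℂ)) * star U := by
      rw [hH.cfc_eq Real.log]; rfl
    set Dlog : Matrix (Fin n) (Fin n) ℂ := diagonal (fun i => ((Real.log (d i) : ℝ) : ℂ)) with hDlog
    have h1 : δ (cfc Real.log ρ) = U * (b * Dlog - Dlog * b) * star U := by
      rw [hainner, hlog, hab, sandwich_mul, sandwich_mul, ← Matrix.sub_mul, ← Matrix.mul_sub]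
    have h2 : b * Dlog - Dlog * b
        = ∑ i : Fin n, ∑ j : Fin n,
          (((Real.log (d j) - Real.log (d i) : ℝ) : ℂ) * b i j) • single i j (1:ℂ) := by
      have h3 := comm_diag_expand (fun i => -((Real.log (d i) : ℝ) : ℂ)) b
      have h4 : diagonal (fun i => -((Real.log (d i) : ℝ) : ℂ)) = -Dlog := by
        rw [hDlog, ← Matrix.diagonal_neg]
      rw [h4] at h3
      have h5 : -Dlog * b - b * -Dlog = b * Dlog - Dlog * b := by noncomm_ring
      rw [h5] at h3
      rw [h3]
      refine Finset.sum_congr rfl fun i _ => Finset.sum_congr rfl fun j _ => ?_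
      congr 1
      push_cast
      try ring
    rw [h1, h2, Matrix.mul_sum, Matrix.sum_mul]
    rw [hT]
    congr 1; funext i
    rw [Matrix.mul_sum, Matrix.sum_mul]
    congr 1; funext j
    rw [mul_smul_comm, smul_mul_assoc]
  -- integrand identity
  have hintegrand : ∀ r ∈ Ioi (0:ℝ),
      (ρ + r • (1 : Matrix (Fin n) (Fin n) ℂ))⁻¹ * δ ρ *
        (ρ + r • (1 : Matrix (Fin n) (Fin n) ℂ))⁻¹
      = ∑ i : Fin n, ∑ j : Fin n,
          ((((d i + r)⁻¹ - (d j + r)⁻¹ : ℝ) : ℂ) * b i j) • (U * single i j (1:ℂ) * star U) := by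
    intro r hr
    have hne : ∀ i, ((d i + r : ℝ) : ℂ) ≠ 0 := by
      intro i
      have h0 : (0:ℝ) < d i + r := by have := hdpos i; have := hr.out; linarith
      exact_mod_cast Complex.ofReal_ne_zero.mpr h0.ne'
    set S : Matrix (Fin n) (Fin n) ℂ := ρ + r • (1 : Matrix (Fin n) (Fin n) ℂ) with hSdef
    set Dr : Matrix (Fin n) (Fin n) ℂ := diagonal (fun i => (((d i + r : ℝ)) : ℂ)⁻¹) with hDr
    set R : Matrix (Fin n) (Fin n) ℂ := U * Dr * star U with hRdef
    have hSdiag : S = U * diagonal (fun i => ((d i + r : ℝ) : ℂ)) * star U := by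
      have h1 : r • (1 : Matrix (Fin n) (Fin n) ℂ) = U * Matrix.diagonal (fun _ => (r:ℂ)) * star U := by
        have h2 : Matrix.diagonal (fun _ : Fin n => (r:ℂ)) = r • (1 : Matrix (Fin n) (Fin n) ℂ) := by
          ext i j
          by_cases hij : i = j
          · subst hij; simp [Matrix.one_apply]
          · simp [Matrix.diagonal_apply_ne _ hij, Matrix.one_apply, hij]
        rw [h2, Matrix.mul_smul, Matrix.smul_mul, mul_one, hu1]
      rw [hSdef, hspec, h1, ← Matrix.add_mul, ← Matrix.mul_add, Matrix.diagonal_add]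
      congr 2
      funext i
      push_cast
      try ring
    have hSR : S * R = 1 := by
      rw [hSdiag, hRdef, sandwich_mul, hDr, Matrix.diagonal_mul_diagonal]
      have h3 : (fun i => ((d i + r : ℝ) : ℂ) * ((d i + r : ℝ) : ℂ)⁻¹) = fun _ => (1:ℂ) := by
        funext i; exact mul_inv_cancel₀ (hne i)
      rw [h3, Matrix.diagonal_one, mul_one, hu1]
    have hRS1 : R * S = 1 := by
      rw [hSdiag, hRdef, sandwich_mul, hDr, Matrix.diagonal_mul_diagonal]
      have h3 : (fun i => ((d i + r : ℝ) : ℂ)⁻¹ * ((d i + r : ℝ) : ℂ)) = fun _ => (1:ℂ) := by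
        funext i; exact inv_mul_cancel₀ (hne i)
      rw [h3, Matrix.diagonal_one, mul_one, hu1]
    have hRS : S⁻¹ = R := Matrix.inv_eq_right_inv hSR
    have hcomm : δ ρ = a * S - S * a := by
      rw [hainner, hSdef]
      have h4 : a * (r • (1 : Matrix (Fin n) (Fin n) ℂ)) = (r • (1 : Matrix (Fin n) (Fin n) ℂ)) * a := by
        rw [Matrix.mul_smul, Matrix.smul_mul, mul_one, one_mul]
      rw [mul_add, add_mul, h4]
      abel
    calc S⁻¹ * δ ρ * S⁻¹ = R * (a * S - S * a) * R := by rw [hRS, hcomm]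
      _ = R * a * (S * R) - (R * S) * a * R := by noncomm_ring
      _ = R * a - a * R := by rw [hSR, hRS1, mul_one, one_mul]
      _ = U * (Dr * b - b * Dr) * star U := by
          rw [hRdef, hab, sandwich_mul, sandwich_mul, ← Matrix.sub_mul, ← Matrix.mul_sub]
      _ = _ := by
          rw [hDr, comm_diag_expand]
          rw [Matrix.mul_sum, Matrix.sum_mul]
          refine Finset.sum_congr rfl fun i _ => ?_
          rw [Matrix.mul_sum, Matrix.sum_mul]
          refine Finset.sum_congr rfl fun j _ => ?_
          rw [mul_smul_comm, smul_mul_assoc]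
          have h5 : (((d i + r : ℝ) : ℂ)⁻¹ - ((d j + r : ℝ) : ℂ)⁻¹)
              = (((d i + r)⁻¹ - (d j + r)⁻¹ : ℝ) : ℂ) := by push_cast; ring
          rw [h5]
  -- now the integral
  have hint_meas : ∀ i j : Fin n, @IntegrableOn ℝ (Matrix (Fin n) (Fin n) ℂ) _
      PseudoMetricSpace.toUniformSpace.toTopologicalSpace SeminormedAddGroup.toContinuousENorm
      (fun r : ℝ => ((((d i + r)⁻¹ - (d j + r)⁻¹ : ℝ) : ℂ) * b i j) • (U * single i j (1:ℂ) * star U))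
      (Ioi 0) volume := by
    intro i j
    exact (((scalar_integrable (hdpos i) (hdpos j)).ofReal).mul_const (b i j)).smul_const _
  rw [hLHS]
  rw [setIntegral_congr_fun measurableSet_Ioi hintegrand]
  rw [integral_finset_sum _ (fun i _ => integrable_finset_sum _ (fun j _ => hint_meas i j))]
  rw [hT]
  refine Finset.sum_congr rfl fun i _ => ?_
  rw [integral_finset_sum _ (fun j _ => hint_meas i j)]
  refine Finset.sum_congr rfl fun j _ => ?_
  rw [integral_smul_const, integral_mul_const]
  have hcoe : ∫ r in Ioi (0:ℝ), ((((d i + r)⁻¹ - (d j + r)⁻¹ : ℝ)) : ℂ)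
      = (((∫ r in Ioi (0:ℝ), ((d i + r)⁻¹ - (d j + r)⁻¹ : ℝ)) : ℝ) : ℂ) :=
    integral_ofReal (𝕜 := ℂ)
  rw [hcoe, scalar_integral (hdpos i) (hdpos j)]
end
end

section
/- The function f(x) = (x − 1)/ln(x) (extended by f(1) = 1) is operator monotone on (0, ∞). -/
open Matrix MeasureTheory Set Filter
open scoped ComplexOrder Topology

noncomputable section

/-- The function `f(x) = (x − 1)/ln x`, extended by `f(1) = 1`. -/
def logMeanFun (x : ℝ) : ℝ :=
  if x = 1 then 1 else (x - 1) / Real.log x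

/-- The reciprocal function `g(x) = ln x/(x-1)`, extended by `g(1) = 1`. -/
def gFun (x : ℝ) : ℝ :=
  if x = 1 then 1 else Real.log x / (x - 1)

lemma gFun_pos {x : ℝ} (hx : 0 < x) : 0 < gFun x := by
  unfold gFun
  rcases lt_trichotomy x 1 with h | h | h
  · rw [if_neg h.ne]
    exact div_pos_of_neg_of_neg (Real.log_neg hx h) (by linarith)
  · simp [h]
  · rw [if_neg h.ne']
    exact div_pos (Real.log_pos h) (by linarith)

lemma logMeanFun_eq_inv_gFun {x : ℝ} (hx : 0 < x) : logMeanFun x = (gFun x)⁻¹ := by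
  unfold logMeanFun gFun
  rcases eq_or_ne x 1 with h | h
  · simp [h]
  · rw [if_neg h, if_neg h, inv_div]

/-- antiderivative -/
private def primFun (x t : ℝ) : ℝ :=
  if x = 1 then -(1 + t)⁻¹ else (Real.log (1 + t) - Real.log (x + t)) / (x - 1)

private lemma primFun_hasDeriv {x : ℝ} (hx : 0 < x) {t : ℝ} (ht : 0 ≤ t) :
    HasDerivAt (primFun x) (((x + t) * (1 + t))⁻¹) t := by
  have h1 : (0:ℝ) < 1 + t := by linarith
  have hxt : (0:ℝ) < x + t := by linarith
  have h0 : HasDerivAt (fun t : ℝ => 1 + t) 1 t := by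
    simpa using (hasDerivAt_id t).const_add 1
  rcases eq_or_ne x 1 with h | h
  · subst h
    have hder : HasDerivAt (fun t : ℝ => -(1 + t)⁻¹) (-(-1 / (1 + t) ^ 2)) t := (h0.inv h1.ne').neg
    have h2 : primFun 1 = fun t : ℝ => -(1 + t)⁻¹ := by
      funext s; simp [primFun]
    rw [h2]
    convert hder using 1
    rw [neg_div, neg_neg, one_div, sq]
  · have hx0 : HasDerivAt (fun t : ℝ => x + t) 1 t := by
      simpa using (hasDerivAt_id t).const_add x
    have hlog1 : HasDerivAt (fun t : ℝ => Real.log (1 + t)) ((1 + t)⁻¹) t := by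
      simpa [Function.comp_def] using (Real.hasDerivAt_log h1.ne').comp t h0
    have hlogx : HasDerivAt (fun t : ℝ => Real.log (x + t)) ((x + t)⁻¹) t := by
      simpa [Function.comp_def] using (Real.hasDerivAt_log hxt.ne').comp t hx0
    have hd : HasDerivAt (fun t : ℝ => (Real.log (1 + t) - Real.log (x + t)) / (x - 1))
        (((1 + t)⁻¹ - (x + t)⁻¹) / (x - 1)) t := (hlog1.sub hlogx).div_const (x - 1)
    have h2 : primFun x = fun t : ℝ => (Real.log (1 + t) - Real.log (x + t)) / (x - 1) := by
      funext s; simp [primFun, h]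
    rw [h2]
    convert hd using 1
    have hx1 : x - 1 ≠ 0 := sub_ne_zero.mpr h
    have := h1.ne'
    have := hxt.ne'
    field_simp
    ring

private lemma primFun_tendsto {x : ℝ} (hx : 0 < x) :
    Tendsto (primFun x) atTop (𝓝 0) := by
  rcases eq_or_ne x 1 with h | h
  · subst h
    have h1 : Tendsto (fun t : ℝ => (1 + t)⁻¹) atTop (𝓝 0) := by
      have h := tendsto_inv_atTop_zero (𝕜 := ℝ)
      exact h.comp (tendsto_atTop_add_const_left _ 1 tendsto_id)
    have : Tendsto (fun t : ℝ => -(1 + t)⁻¹) atTop (𝓝 0) := by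
      simpa using h1.neg
    convert this using 2 with t
    simp [primFun]
  · have hxt : Tendsto (fun t : ℝ => x + t) atTop atTop :=
      tendsto_atTop_add_const_left _ x tendsto_id
    have hq0 : Tendsto (fun t : ℝ => (1 - x) / (x + t)) atTop (𝓝 0) :=
      Tendsto.div_atTop tendsto_const_nhds hxt
    have hq : Tendsto (fun t : ℝ => (1 + t) / (x + t)) atTop (𝓝 1) := by
      have heq : (fun t : ℝ => (1 + t) / (x + t)) =ᶠ[atTop]
          fun t => 1 + (1 - x) / (x + t) := by
        filter_upwards [eventually_gt_atTop 0] with t ht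
        have : x + t ≠ 0 := by positivity
        field_simp
        ring
      rw [tendsto_congr' heq]
      simpa using (tendsto_const_nhds (x := (1:ℝ)) (f := atTop)).add hq0
    have hlog : Tendsto (fun t : ℝ => Real.log ((1 + t) / (x + t))) atTop (𝓝 0) := by
      have := (Real.continuousAt_log one_ne_zero).tendsto.comp hq
      simpa [Function.comp_def] using this
    have heq : primFun x =ᶠ[atTop] fun t => Real.log ((1 + t) / (x + t)) / (x - 1) := by
      filter_upwards [eventually_gt_atTop 0] with t ht
      have h1 : (1:ℝ) + t ≠ 0 := by positivity
      have h2 : x + t ≠ 0 := by positivity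
      simp [primFun, h, Real.log_div h1 h2]
    rw [tendsto_congr' heq]
    simpa using hlog.div_const (x - 1)

private lemma primFun_integrand_nonneg {x : ℝ} (hx : 0 < x) {t : ℝ} (ht : t ∈ Ioi (0:ℝ)) :
    0 ≤ ((x + t) * (1 + t))⁻¹ := by
  have : (0:ℝ) < t := ht
  positivity

lemma gFun_integrableOn {x : ℝ} (hx : 0 < x) :
    IntegrableOn (fun t => ((x + t) * (1 + t))⁻¹) (Ioi (0:ℝ)) :=
  integrableOn_Ioi_deriv_of_nonneg (primFun_hasDeriv hx le_rfl).continuousAt.continuousWithinAt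
    (fun t ht => primFun_hasDeriv hx (le_of_lt ht)) (fun t ht => primFun_integrand_nonneg hx ht)
    (primFun_tendsto hx)

lemma gFun_integral {x : ℝ} (hx : 0 < x) :
    ∫ t in Ioi (0:ℝ), ((x + t) * (1 + t))⁻¹ = gFun x := by
  rw [MeasureTheory.integral_Ioi_of_hasDerivAt_of_tendsto
    (primFun_hasDeriv hx le_rfl).continuousAt.continuousWithinAt
    (fun t ht => primFun_hasDeriv hx (le_of_lt ht)) (gFun_integrableOn hx)
    (primFun_tendsto hx)]
  rcases eq_or_ne x 1 with h | h
  · simp [primFun, gFun, h]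
  · simp [primFun, gFun, h, Real.log_one]
    ring

/-! ### Matrix helper lemmas -/

namespace LogMeanAux

open Complex

variable {n : ℕ} {M A B : Matrix (Fin n) (Fin n) ℂ}

lemma ofReal_rc : (RCLike.ofReal : ℝ → ℂ) = Complex.ofReal := rfl

lemma cfc'_herm (hM : M.IsHermitian) (f : ℝ → ℝ) : (hM.cfc f).IsHermitian := by
  rw [← hM.cfc_eq]
  exact (cfc_predicate f M : IsSelfAdjoint _)

lemma cfc'_mul (hM : M.IsHermitian) (f h : ℝ → ℝ) :
    hM.cfc f * hM.cfc h = hM.cfc (fun x => f x * h x) := by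
  simp only [Matrix.IsHermitian.cfc, Unitary.conjStarAlgAut_apply, ofReal_rc]
  have key : ∀ {a b c d e f : Matrix (Fin n) (Fin n) ℂ},
      (a * b * c) * (d * e * f) = a * (b * (c * d) * e) * f := by
    intros; simp only [mul_assoc]
  rw [key, Unitary.star_mul_self_of_mem (SetLike.coe_mem _), mul_one,
    Matrix.diagonal_mul_diagonal]
  congr! with i
  simp

lemma cfc'_congr (hM : M.IsHermitian) {f h : ℝ → ℝ}
    (e : ∀ i, f (hM.eigenvalues i) = h (hM.eigenvalues i)) : hM.cfc f = hM.cfc h := by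
  simp only [Matrix.IsHermitian.cfc, Unitary.conjStarAlgAut_apply, ofReal_rc]
  congr 2
  rw [Matrix.diagonal_eq_diagonal_iff]
  intro i
  simp [e i]

lemma cfc'_one (hM : M.IsHermitian) : hM.cfc (fun _ => 1) = 1 := by
  simp only [Matrix.IsHermitian.cfc, Unitary.conjStarAlgAut_apply, ofReal_rc]
  have hd : Matrix.diagonal (Complex.ofReal ∘ (fun _ : ℝ => (1:ℝ)) ∘ hM.eigenvalues)
      = (1 : Matrix (Fin n) (Fin n) ℂ) := by
    rw [← Matrix.diagonal_one]
    rw [Matrix.diagonal_eq_diagonal_iff]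
    intro i; simp
  rw [hd, mul_one, Unitary.mul_star_self_of_mem (SetLike.coe_mem _)]

lemma cfc'_inv (hM : M.IsHermitian) (f : ℝ → ℝ) (hf : ∀ i, f (hM.eigenvalues i) ≠ 0) :
    (hM.cfc f)⁻¹ = hM.cfc (fun x => (f x)⁻¹) := by
  apply Matrix.inv_eq_left_inv
  rw [cfc'_mul, ← cfc'_one hM]
  exact cfc'_congr hM fun i => inv_mul_cancel₀ (hf i)

lemma cfc'_add_const (hM : M.IsHermitian) (t : ℝ) :
    hM.cfc (fun x => x + t) = M + (t : ℂ) • 1 := by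
  have hdiag : Matrix.diagonal (Complex.ofReal ∘ (fun x => x + t) ∘ hM.eigenvalues)
      = Matrix.diagonal (Complex.ofReal ∘ hM.eigenvalues) + (t : ℂ) • 1 := by
    ext i j
    by_cases hij : i = j <;>
      simp [hij, Matrix.diagonal_apply, Matrix.one_apply]
  simp only [Matrix.IsHermitian.cfc, Unitary.conjStarAlgAut_apply, ofReal_rc, hdiag, mul_add, add_mul]
  congr 1
  · exact (hM.spectral_theorem).symm
  · rw [mul_smul_comm, mul_one, Matrix.smul_mul,
      Unitary.mul_star_self_of_mem (SetLike.coe_mem _)]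

lemma qf_cfc (hM : M.IsHermitian) (f : ℝ → ℝ) (v : Fin n → ℂ) :
    star v ⬝ᵥ (hM.cfc f) *ᵥ v
      = ((∑ i, f (hM.eigenvalues i) * Complex.normSq
          ((star (hM.eigenvectorUnitary : Matrix (Fin n) (Fin n) ℂ) *ᵥ v) i) : ℝ) : ℂ) := by
  set U := (hM.eigenvectorUnitary : Matrix (Fin n) (Fin n) ℂ) with hU
  set w := star U *ᵥ v with hw
  have hsw : star v ᵥ* U = star w := by
    rw [hw, Matrix.star_mulVec]
    congr 1
    rw [show (star U)ᴴ = U from by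
      rw [Matrix.star_eq_conjTranspose, Matrix.conjTranspose_conjTranspose]]
  have step1 : star v ⬝ᵥ (hM.cfc f) *ᵥ v
      = star w ⬝ᵥ (Matrix.diagonal (Complex.ofReal ∘ f ∘ hM.eigenvalues) *ᵥ w) := by
    simp only [Matrix.IsHermitian.cfc, Unitary.conjStarAlgAut_apply, ofReal_rc, ← Matrix.mulVec_mulVec]
    rw [Matrix.dotProduct_mulVec, hsw]
  rw [step1]
  rw [dotProduct]
  rw [Complex.ofReal_sum]
  refine Finset.sum_congr rfl fun i _ => ?_
  rw [Matrix.mulVec_diagonal]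
  simp only [Pi.star_apply, Function.comp_apply]
  rw [Complex.ofReal_mul, Complex.normSq_eq_conj_mul_self]
  rw [RCLike.star_def]
  ring

lemma inv_add_smul (hM : M.IsHermitian) {t : ℝ} (ht : ∀ i, hM.eigenvalues i + t ≠ 0) :
    (M + (t : ℂ) • 1)⁻¹ = hM.cfc (fun x => (x + t)⁻¹) := by
  rw [← cfc'_add_const hM t, cfc'_inv hM _ ht]

lemma smul_one_posSemidef {t : ℝ} (ht : 0 ≤ t) :
    ((t : ℂ) • (1 : Matrix (Fin n) (Fin n) ℂ)).PosSemidef := by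
  have hd : ((t : ℂ) • (1 : Matrix (Fin n) (Fin n) ℂ))
      = Matrix.diagonal (fun _ => (t : ℂ)) := by
    ext i j
    by_cases hij : i = j <;> simp [hij, Matrix.one_apply, Matrix.diagonal_apply]
  rw [hd]
  exact Matrix.PosSemidef.diagonal fun i => Complex.zero_le_real.mpr ht

lemma inv_sub_inv_posSemidef (hA : A.PosDef) (hB : B.PosDef) (hBA : (B - A).PosSemidef) :
    (A⁻¹ - B⁻¹).PosSemidef := by
  have hAd : IsUnit A.det := (Matrix.isUnit_iff_isUnit_det A).mp hA.isUnit
  have hBd : IsUnit B.det := (Matrix.isUnit_iff_isUnit_det B).mp hB.isUnit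
  refine PosSemidef.of_dotProduct_mulVec_nonneg (hA.inv.1.sub hB.inv.1) fun v => ?_
  set x := B⁻¹ *ᵥ v with hx
  set y := x - A⁻¹ *ᵥ v with hy
  have e1 : A *ᵥ (A⁻¹ *ᵥ v) = v := by
    rw [Matrix.mulVec_mulVec, Matrix.mul_nonsing_inv _ hAd, Matrix.one_mulVec]
  have e2 : B *ᵥ x = v := by
    rw [hx, Matrix.mulVec_mulVec, Matrix.mul_nonsing_inv _ hBd, Matrix.one_mulVec]
  have e3 : star (A⁻¹ *ᵥ v) ⬝ᵥ (A *ᵥ x) = star v ⬝ᵥ x := by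
    rw [Matrix.star_mulVec, hA.inv.1.eq, ← Matrix.dotProduct_mulVec,
      Matrix.mulVec_mulVec, Matrix.nonsing_inv_mul _ hAd, Matrix.one_mulVec]
  have e4 : star (A⁻¹ *ᵥ v) ⬝ᵥ v = star v ⬝ᵥ (A⁻¹ *ᵥ v) := by
    rw [Matrix.star_mulVec, hA.inv.1.eq, ← Matrix.dotProduct_mulVec]
  have e5 : star x ⬝ᵥ v = star v ⬝ᵥ x := by
    rw [hx, Matrix.star_mulVec, hB.inv.1.eq, ← Matrix.dotProduct_mulVec]
  have key : star v ⬝ᵥ (A⁻¹ - B⁻¹) *ᵥ v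
      = star y ⬝ᵥ (A *ᵥ y) + star x ⬝ᵥ ((B - A) *ᵥ x) := by
    rw [hy]
    simp only [Matrix.sub_mulVec, Matrix.mulVec_sub, star_sub, sub_dotProduct,
      dotProduct_sub, e1, e2, e3, e4, e5]
    ring
  rw [key]
  exact add_nonneg (hA.posSemidef.dotProduct_mulVec_nonneg y) (hBA.dotProduct_mulVec_nonneg x)

lemma cfc'_posDef (hM : M.PosDef) {f : ℝ → ℝ} (hf : ∀ x : ℝ, 0 < x → 0 < f x) :
    (hM.1.cfc f).PosDef := by
  refine PosDef.of_dotProduct_mulVec_pos (cfc'_herm _ _) fun v hv => ?_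
  rw [qf_cfc, Complex.zero_lt_real]
  set U := (hM.1.eigenvectorUnitary : Matrix (Fin n) (Fin n) ℂ) with hU
  set w := star U *ᵥ v with hw
  have hwne : w ≠ 0 := by
    intro h0
    apply hv
    have hv2 : v = U *ᵥ w := by
      rw [hw, Matrix.mulVec_mulVec, Unitary.mul_star_self_of_mem (SetLike.coe_mem _),
        Matrix.one_mulVec]
    rw [hv2, h0, Matrix.mulVec_zero]
  obtain ⟨i, hi⟩ := Function.ne_iff.mp hwne
  refine Finset.sum_pos' (fun j _ => mul_nonneg (hf _ (hM.eigenvalues_pos j)).le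
    (Complex.normSq_nonneg _)) ⟨i, Finset.mem_univ i, ?_⟩
  exact mul_pos (hf _ (hM.eigenvalues_pos i)) (Complex.normSq_pos.mpr hi)

lemma cfc_gFun_antitone (hA : A.PosDef) (hB : B.PosDef) (hBA : (B - A).PosSemidef) :
    (hA.1.cfc gFun - hB.1.cfc gFun).PosSemidef := by
  refine PosSemidef.of_dotProduct_mulVec_nonneg ((cfc'_herm _ _).sub (cfc'_herm _ _)) fun v => ?_
  rw [Matrix.sub_mulVec, dotProduct_sub, qf_cfc, qf_cfc, ← Complex.ofReal_sub,
    Complex.zero_le_real, sub_nonneg]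
  set cA : Fin n → ℝ := fun i => Complex.normSq
    ((star (hA.1.eigenvectorUnitary : Matrix (Fin n) (Fin n) ℂ) *ᵥ v) i) with hcA
  set cB : Fin n → ℝ := fun i => Complex.normSq
    ((star (hB.1.eigenvectorUnitary : Matrix (Fin n) (Fin n) ℂ) *ᵥ v) i) with hcB
  have hintA : ∀ i : Fin n, IntegrableOn
      (fun t : ℝ => cA i * ((hA.1.eigenvalues i + t) * (1 + t))⁻¹) (Ioi (0:ℝ)) :=
    fun i => (gFun_integrableOn (hA.eigenvalues_pos i)).const_mul (cA i)
  have hintB : ∀ i : Fin n, IntegrableOn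
      (fun t : ℝ => cB i * ((hB.1.eigenvalues i + t) * (1 + t))⁻¹) (Ioi (0:ℝ)) :=
    fun i => (gFun_integrableOn (hB.eigenvalues_pos i)).const_mul (cB i)
  have hSA : ∑ i, gFun (hA.1.eigenvalues i) * cA i
      = ∫ t in Ioi (0:ℝ), ∑ i, cA i * ((hA.1.eigenvalues i + t) * (1 + t))⁻¹ := by
    rw [MeasureTheory.integral_finset_sum _ fun i _ => hintA i]
    refine Finset.sum_congr rfl fun i _ => ?_
    rw [MeasureTheory.integral_const_mul, gFun_integral (hA.eigenvalues_pos i), mul_comm]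
  have hSB : ∑ i, gFun (hB.1.eigenvalues i) * cB i
      = ∫ t in Ioi (0:ℝ), ∑ i, cB i * ((hB.1.eigenvalues i + t) * (1 + t))⁻¹ := by
    rw [MeasureTheory.integral_finset_sum _ fun i _ => hintB i]
    refine Finset.sum_congr rfl fun i _ => ?_
    rw [MeasureTheory.integral_const_mul, gFun_integral (hB.eigenvalues_pos i), mul_comm]
  rw [hSA, hSB]
  refine MeasureTheory.setIntegral_mono_on
    (MeasureTheory.integrable_finset_sum _ fun i _ => hintB i)
    (MeasureTheory.integrable_finset_sum _ fun i _ => hintA i)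
    measurableSet_Ioi (fun t ht => ?_)
  have ht0 : (0:ℝ) < t := ht
  have h1t : (0:ℝ) < 1 + t := by linarith
  have hAe : ∀ i, hA.1.eigenvalues i + t ≠ 0 :=
    fun i => (add_pos (hA.eigenvalues_pos i) ht0).ne'
  have hBe : ∀ i, hB.1.eigenvalues i + t ≠ 0 :=
    fun i => (add_pos (hB.eigenvalues_pos i) ht0).ne'
  have hAt : (A + (t : ℂ) • 1).PosDef := hA.add_posSemidef (smul_one_posSemidef ht0.le)
  have hBt : (B + (t : ℂ) • 1).PosDef := hB.add_posSemidef (smul_one_posSemidef ht0.le)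
  have hdiff : (B + (t : ℂ) • 1) - (A + (t : ℂ) • 1) = B - A :=
    by abel
  have hkey := (inv_sub_inv_posSemidef hAt hBt (by rw [hdiff]; exact hBA)).dotProduct_mulVec_nonneg v
  rw [Matrix.sub_mulVec, dotProduct_sub, inv_add_smul hA.1 hAe, inv_add_smul hB.1 hBe,
    qf_cfc, qf_cfc, ← Complex.ofReal_sub, Complex.zero_le_real, sub_nonneg] at hkey
  have expandA : ∑ i, cA i * ((hA.1.eigenvalues i + t) * (1 + t))⁻¹
      = (1 + t)⁻¹ * ∑ i, (hA.1.eigenvalues i + t)⁻¹ * cA i := by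
    rw [Finset.mul_sum]
    refine Finset.sum_congr rfl fun i _ => ?_
    rw [mul_inv]
    ring
  have expandB : ∑ i, cB i * ((hB.1.eigenvalues i + t) * (1 + t))⁻¹
      = (1 + t)⁻¹ * ∑ i, (hB.1.eigenvalues i + t)⁻¹ * cB i := by
    rw [Finset.mul_sum]
    refine Finset.sum_congr rfl fun i _ => ?_
    rw [mul_inv]
    ring
  rw [expandA, expandB]
  exact mul_le_mul_of_nonneg_left hkey (inv_nonneg.mpr h1t.le)

end LogMeanAux

/-- The function `f(x) = (x − 1)/ln x` (with `f(1) = 1`) is operator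
monotone on `(0, ∞)`: for all positive definite matrices `A ≤ B` (of any size, in the
Loewner order), `f(A) ≤ f(B)`. -/
theorem logMeanFun_operatorMonotone :
    ∀ (n : ℕ) (A B : Matrix (Fin n) (Fin n) ℂ), A.PosDef → B.PosDef →
      (B - A).PosSemidef → (cfc logMeanFun B - cfc logMeanFun A).PosSemidef := by
  intro n A B hA hB hBA
  have hgA : (hA.1.cfc gFun).PosDef := LogMeanAux.cfc'_posDef hA fun x hx => gFun_pos hx
  have hgB : (hB.1.cfc gFun).PosDef := LogMeanAux.cfc'_posDef hB fun x hx => gFun_pos hx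
  have hmono := LogMeanAux.cfc_gFun_antitone hA hB hBA
  have h := LogMeanAux.inv_sub_inv_posSemidef hgB hgA hmono
  have hrwA : (hA.1.cfc gFun)⁻¹ = cfc logMeanFun A := by
    rw [LogMeanAux.cfc'_inv hA.1 gFun fun i => (gFun_pos (hA.eigenvalues_pos i)).ne',
      hA.1.cfc_eq logMeanFun]
    exact LogMeanAux.cfc'_congr hA.1 fun i =>
      (logMeanFun_eq_inv_gFun (hA.eigenvalues_pos i)).symm
  have hrwB : (hB.1.cfc gFun)⁻¹ = cfc logMeanFun B := by
    rw [LogMeanAux.cfc'_inv hB.1 gFun fun i => (gFun_pos (hB.eigenvalues_pos i)).ne',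
      hB.1.cfc_eq logMeanFun]
    exact LogMeanAux.cfc'_congr hB.1 fun i =>
      (logMeanFun_eq_inv_gFun (hB.eigenvalues_pos i)).symm
  rw [hrwA, hrwB] at h
  exact h
end
end

section
/- Let g(x) = (1/√(2π)) Σ_{k∈ℤ} e^{−(x−k)²/2} be the periodization of the standard Gaussian density. Then for all real x ∈ [0,1], 2e^{−1/2} + 2e^{−2} + 2e^{−9/2} + (48/125)e^{−25/2} ≤ √(2π)·g(x) ≤ 2 + 2e^{−1/2} + 2e^{−2} + (8/3)e^{−9/2}. -/
noncomputable section

/-- The periodization `g(x) = (1/√(2π)) ∑_{k ∈ ℤ} e^{−(x−k)²/2}` of the standard Gaussian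
density. -/
def gaussPer (x : ℝ) : ℝ :=
  (Real.sqrt (2 * Real.pi))⁻¹ * ∑' k : ℤ, Real.exp (-(x - (k : ℝ)) ^ 2 / 2)

open Real

namespace GaussPerAux

/-- the Gaussian sequence over ℕ -/
def a (n : ℕ) : ℝ := Real.exp (-(n : ℝ) ^ 2 / 2)

lemma a_le_geom (n : ℕ) : a n ≤ Real.exp (-1/2) ^ n := by
  rw [← Real.exp_nat_mul]
  apply Real.exp_le_exp.mpr
  have h : (n : ℝ) ≤ (n : ℝ) ^ 2 := by
    have := Nat.le_self_pow (two_ne_zero) n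
    exact_mod_cast this
  nlinarith

lemma exp_half_lt_one : Real.exp (-1/2) < 1 := by
  rw [← Real.exp_zero]; apply Real.exp_lt_exp.mpr; norm_num

lemma summable_a : Summable a := by
  refine Summable.of_nonneg_of_le (fun n => (Real.exp_pos _).le) a_le_geom ?_
  exact summable_geometric_of_lt_one (Real.exp_pos _).le exp_half_lt_one

lemma exp_m72_le : Real.exp (-7/2) ≤ 1/4 := by
  have h2 : (2:ℝ) ≤ Real.exp 1 := by linarith [Real.add_one_le_exp 1]
  have h4 : (4:ℝ) ≤ Real.exp 2 := by
    have : Real.exp 2 = Real.exp 1 ^ 2 := by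
      rw [← Real.exp_nat_mul]; norm_num
    nlinarith [Real.exp_pos 1]
  have : Real.exp (-7/2) ≤ Real.exp (-2) := Real.exp_le_exp.mpr (by norm_num)
  have he : Real.exp (-2) = (Real.exp 2)⁻¹ := by
    rw [← Real.exp_neg]
  rw [he] at this
  have : (Real.exp 2)⁻¹ ≤ 1/4 := by
    rw [inv_le_iff_one_le_mul₀ (by positivity)]
    linarith
  linarith [Real.exp_le_exp.mpr (show (-7/2 : ℝ) ≤ -2 by norm_num), he ▸ this]

lemma T_bound : ∑' n, a n ≤ 1 + Real.exp (-1/2) + Real.exp (-2) + (4/3) * Real.exp (-9/2) := by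
  have hs := summable_a
  rw [← hs.sum_add_tsum_nat_add 4]
  have hfin : ∑ i ∈ Finset.range 4, a i = 1 + Real.exp (-1/2) + Real.exp (-2) + Real.exp (-9/2) := by
    simp [Finset.sum_range_succ, a]
    norm_num
  rw [hfin]
  have htail : ∑' n : ℕ, a (n + 4) ≤ (1/3) * Real.exp (-9/2) := by
    set r := Real.exp (-7/2) with hr
    have hr0 : 0 < r := Real.exp_pos _
    have hr1 : r < 1 := by
      rw [hr, ← Real.exp_zero]; exact Real.exp_lt_exp.mpr (by norm_num)
    have hle : ∀ n : ℕ, a (n + 4) ≤ (Real.exp (-9/2) * r) * r ^ n := by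
      intro n
      have : (Real.exp (-9/2) * r) * r ^ n = Real.exp (-9/2 + -7/2 * (n + 1)) := by
        rw [hr, ← Real.exp_nat_mul, ← Real.exp_add, ← Real.exp_add]
        ring_nf
      rw [this, a]
      apply Real.exp_le_exp.mpr
      push_cast
      nlinarith [sq_nonneg ((n:ℝ)), (Nat.cast_nonneg n : (0:ℝ) ≤ (n:ℝ))]
    have hsum1 : Summable (fun n : ℕ => a (n + 4)) := (summable_nat_add_iff 4).mpr hs
    have hsum2 : Summable (fun n : ℕ => (Real.exp (-9/2) * r) * r ^ n) :=
      (summable_geometric_of_lt_one hr0.le hr1).mul_left _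
    calc ∑' n : ℕ, a (n + 4) ≤ ∑' n : ℕ, (Real.exp (-9/2) * r) * r ^ n :=
          hsum1.tsum_le_tsum hle hsum2
      _ = (Real.exp (-9/2) * r) * (1 - r)⁻¹ := by
          rw [tsum_mul_left, tsum_geometric_of_lt_one hr0.le hr1]
      _ ≤ (1/3) * Real.exp (-9/2) := by
          have hr4 : r ≤ 1/4 := exp_m72_le
          have h34 : (3/4 : ℝ) ≤ 1 - r := by linarith
          have hinv : (1 - r)⁻¹ ≤ 4/3 := by
            rw [inv_le_iff_one_le_mul₀ (by linarith)]
            nlinarith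
          have h1 : (Real.exp (-9/2) * r) * (1 - r)⁻¹ ≤ (Real.exp (-9/2) * (1/4)) * (4/3) := by
            apply mul_le_mul
            · exact mul_le_mul_of_nonneg_left hr4 (Real.exp_pos _).le
            · exact hinv
            · positivity
            · positivity
          linarith
  linarith

end GaussPerAux

open GaussPerAux

/-- For all `x ∈ [0,1]`,
`2e^{−1/2} + 2e^{−2} + 2e^{−9/2} + (48/125)e^{−25/2} ≤ √(2π)·g(x)` and
`√(2π)·g(x) ≤ 2 + 2e^{−1/2} + 2e^{−2} + (8/3)e^{−9/2}`. -/
theorem gaussPer_bounds (x : ℝ) (hx : x ∈ Set.Icc (0:ℝ) 1) :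
    2 * Real.exp (-1/2) + 2 * Real.exp (-2) + 2 * Real.exp (-9/2) +
        (48/125) * Real.exp (-25/2) ≤ Real.sqrt (2 * Real.pi) * gaussPer x ∧
    Real.sqrt (2 * Real.pi) * gaussPer x ≤
        2 + 2 * Real.exp (-1/2) + 2 * Real.exp (-2) + (8/3) * Real.exp (-9/2) := by
  obtain ⟨hx0, hx1⟩ := hx
  set f : ℤ → ℝ := fun k => Real.exp (-(x - (k : ℝ)) ^ 2 / 2) with hf
  have hsqrt : Real.sqrt (2 * Real.pi) ≠ 0 := by
    positivity
  have hgp : Real.sqrt (2 * Real.pi) * gaussPer x = ∑' k : ℤ, f k := by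
    rw [gaussPer, ← mul_assoc, mul_inv_cancel₀ hsqrt, one_mul]
  -- summability on the two halves
  have hpos_le : ∀ n : ℕ, f n ≤ Real.exp 1 * Real.exp (-1/2) ^ n := by
    intro n
    rw [← Real.exp_nat_mul, ← Real.exp_add, hf]
    apply Real.exp_le_exp.mpr
    have hn : (0:ℝ) ≤ (n:ℝ) := Nat.cast_nonneg n
    push_cast
    nlinarith [sq_nonneg (x - (n:ℝ) + 1), sq_nonneg (x - (n:ℝ))]
  have hneg_le : ∀ n : ℕ, f (-(n + 1)) ≤ Real.exp (-1/2) ^ n := by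
    intro n
    rw [← Real.exp_nat_mul, hf]
    apply Real.exp_le_exp.mpr
    have hn : (0:ℝ) ≤ (n:ℝ) := Nat.cast_nonneg n
    push_cast
    nlinarith [sq_nonneg (x + (n:ℝ))]
  have hsumgeo : Summable (fun n : ℕ => Real.exp (-1/2) ^ n) :=
    summable_geometric_of_lt_one (Real.exp_pos _).le exp_half_lt_one
  have hs1 : Summable (fun n : ℕ => f n) :=
    Summable.of_nonneg_of_le (fun n => (Real.exp_pos _).le) hpos_le (hsumgeo.mul_left _)
  have hs2 : Summable (fun n : ℕ => f (-(n + 1))) :=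
    Summable.of_nonneg_of_le (fun n => (Real.exp_pos _).le) hneg_le hsumgeo
  have hs : Summable f := Summable.of_nat_of_neg_add_one hs1 hs2
  constructor
  · -- lower bound
    rw [hgp]
    have hfin : ∑ k ∈ ({-3,-2,-1,0,1,2,3,4} : Finset ℤ), f k ≤ ∑' k : ℤ, f k :=
      hs.sum_le_tsum _ (fun k _ => (Real.exp_pos _).le)
    refine le_trans ?_ hfin
    have hsum : ∑ k ∈ ({-3,-2,-1,0,1,2,3,4} : Finset ℤ), f k =
        f (-3) + f (-2) + f (-1) + f 0 + f 1 + f 2 + f 3 + f 4 := by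
      simp [Finset.sum_insert, Finset.mem_insert]
      ring
    rw [hsum]
    have l1 : Real.exp (-8) ≤ f (-3) := by
      rw [hf]; apply Real.exp_le_exp.mpr; push_cast; nlinarith
    have l2 : Real.exp (-9/2) ≤ f (-2) := by
      rw [hf]; apply Real.exp_le_exp.mpr; push_cast; nlinarith
    have l3 : Real.exp (-2) ≤ f (-1) := by
      rw [hf]; apply Real.exp_le_exp.mpr; push_cast; nlinarith
    have l4 : Real.exp (-1/2) ≤ f 0 := by
      rw [hf]; apply Real.exp_le_exp.mpr; push_cast; nlinarith
    have l5 : Real.exp (-1/2) ≤ f 1 := by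
      rw [hf]; apply Real.exp_le_exp.mpr; push_cast; nlinarith
    have l6 : Real.exp (-2) ≤ f 2 := by
      rw [hf]; apply Real.exp_le_exp.mpr; push_cast; nlinarith
    have l7 : Real.exp (-9/2) ≤ f 3 := by
      rw [hf]; apply Real.exp_le_exp.mpr; push_cast; nlinarith
    have l8 : Real.exp (-8) ≤ f 4 := by
      rw [hf]; apply Real.exp_le_exp.mpr; push_cast; nlinarith
    have l9 : Real.exp (-25/2) ≤ Real.exp (-8) := Real.exp_le_exp.mpr (by norm_num)
    nlinarith [Real.exp_pos (-25/2 : ℝ)]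
  · -- upper bound
    rw [hgp, tsum_of_nat_of_neg_add_one hs1 hs2]
    have hTpos : ∑' n : ℕ, f n ≤ 1 + ∑' n, a n := by
      rw [hs1.tsum_eq_zero_add]
      have h0 : f (0 : ℤ) ≤ 1 := by
        rw [hf, ← Real.exp_zero]
        apply Real.exp_le_exp.mpr
        push_cast
        nlinarith
      have hterm : ∀ n : ℕ, f (((n + 1 : ℕ) : ℤ)) ≤ a n := by
        intro n
        rw [hf, a]
        apply Real.exp_le_exp.mpr
        push_cast
        have hn : (0:ℝ) ≤ (n:ℝ) := Nat.cast_nonneg n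
        nlinarith
      have hs1' : Summable (fun n : ℕ => f (((n + 1 : ℕ) : ℤ))) :=
        (summable_nat_add_iff (f := fun n : ℕ => f ((n : ℕ) : ℤ)) 1).mpr hs1
      have hle := hs1'.tsum_le_tsum hterm summable_a
      have h00 : f (((0 : ℕ) : ℤ)) ≤ 1 := by simpa using h0
      linarith
    have hTneg : ∑' n : ℕ, f (-(n + 1)) ≤ (∑' n, a n) - 1 := by
      have hterm : ∀ n : ℕ, f (-(n + 1)) ≤ a (n + 1) := by
        intro n
        rw [hf, a]
        apply Real.exp_le_exp.mpr
        push_cast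
        have hn : (0:ℝ) ≤ (n:ℝ) := Nat.cast_nonneg n
        nlinarith
      have hsa : Summable (fun n : ℕ => a (n + 1)) := (summable_nat_add_iff 1).mpr summable_a
      have h1 : ∑' n : ℕ, f (-(n + 1)) ≤ ∑' n : ℕ, a (n + 1) := hs2.tsum_le_tsum hterm hsa
      have h2 : ∑' n, a n = a 0 + ∑' n : ℕ, a (n + 1) := summable_a.tsum_eq_zero_add
      have h3 : a 0 = 1 := by simp [a]
      linarith
    have hT := T_bound
    linarith
end
end
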